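/- (Continuity of the Busemann map for ℍ) Let ℍ be the hyperbolic plane and α_n, α : [0,∞) → ℍ rays with α_n → α uniformly on compact subsets of [0,∞). Then B_{α_n}(x,y) → B_α(x,y) for all x, y ∈ ℍ, uniformly on compact subsets of ℍ × ℍ. -/

import Mathlib

open Filter UpperHalfPlane
open Real Complex

lemma mycosh_inj {x y : ℝ} (hx : 0 ≤ x) (hy : 0 ≤ y) (h : Real.cosh x = Real.cosh y) : x = y :=
  Real.cosh_strictMonoOn.injOn hx hy h

noncomputable def iota (z : ℍ) : ℍ := UpperHalfPlane.mk (-(z:ℂ))⁻¹ z.im_inv_neg_coe_pos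

lemma iota_coe (z : ℍ) : (iota z : ℂ) = (-(z:ℂ))⁻¹ := rfl

lemma iota_im (z : ℍ) : (iota z).im = z.im / Complex.normSq z := by
  simp [iota, Complex.inv_im, neg_div]

lemma iota_re (z : ℍ) : (iota z).re = -z.re / Complex.normSq z := by
  simp [iota, Complex.inv_re, neg_div]

lemma normSq_eq (z : ℍ) : Complex.normSq z = z.re^2 + z.im^2 := by
  rw [Complex.normSq_apply, coe_re, coe_im]; ring

lemma iota_dist (z w : ℍ) : dist (iota z) (iota w) = dist z w := by
  have hz := z.im_pos; have hw := w.im_pos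
  have hnz : (0:ℝ) < Complex.normSq z := z.normSq_pos
  have hnw : (0:ℝ) < Complex.normSq w := w.normSq_pos
  apply mycosh_inj dist_nonneg dist_nonneg
  rw [cosh_dist', cosh_dist', iota_im, iota_im, iota_re, iota_re, normSq_eq, normSq_eq]
  have h1 : z.re^2 + z.im^2 > 0 := by positivity
  have h2 : w.re^2 + w.im^2 > 0 := by positivity
  field_simp
  ring

lemma affine_ex (c y : ℝ) (hy : 0 < y) : ∃ φ : ℍ → ℍ,
    (∀ z w : ℍ, dist (φ z) (φ w) = dist z w) ∧ (∀ z : ℍ, (φ z : ℂ) = (y⁻¹ : ℝ) * ((z:ℂ) - c)) := by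
  refine ⟨fun z => (⟨y⁻¹, inv_pos.mpr hy⟩ : {x : ℝ // 0 < x}) • ((-c) +ᵥ z), fun z w => ?_, fun z => ?_⟩
  · rw [(isometry_pos_mul _).dist_eq, (isometry_real_vadd _).dist_eq]
  · rw [coe_pos_real_smul, coe_vadd]
    push_cast
    rw [Complex.real_smul]
    push_cast
    ring

lemma stage1 (p q : ℍ) : ∃ φ : ℍ → ℍ,
    (∀ z w : ℍ, dist (φ z) (φ w) = dist z w) ∧ (φ p).re = (φ q).re := by
  by_cases h : p.re = q.re
  · exact ⟨id, fun _ _ => rfl, h⟩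
  · set c : ℝ := ((p.re^2+p.im^2) - (q.re^2+q.im^2))/(2*(p.re - q.re)) with hc
    set r : ℝ := Real.sqrt ((p.re - c)^2 + p.im^2) with hrdef
    have hrsq : r^2 = (p.re - c)^2 + p.im^2 := Real.sq_sqrt (by positivity)
    have hrsq' : r^2 = (q.re - c)^2 + q.im^2 := by
      rw [hrsq]
      have hne : p.re - q.re ≠ 0 := sub_ne_zero.mpr h
      field_simp [hc]
      linear_combination (-1:ℝ) * (by rw [hc]; exact div_mul_cancel₀ _ (mul_ne_zero two_ne_zero hne) : c * (2*(p.re - q.re)) = (p.re^2+p.im^2) - (q.re^2+q.im^2))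
    have hr0 : 0 ≤ r := Real.sqrt_nonneg _
    have hp2 : (0:ℝ) < p.im^2 := by have := p.im_pos; positivity
    have hq2 : (0:ℝ) < q.im^2 := by have := q.im_pos; positivity
    have hpr : p.re - c < r := by nlinarith
    have hqr : q.re - c < r := by nlinarith
    set e : ℝ := c + r with he
    refine ⟨fun z => iota ((-e) +ᵥ z), fun z w => by rw [iota_dist, (isometry_real_vadd _).dist_eq], ?_⟩
    have key : ∀ z : ℍ, z.re - c < r → r^2 = (z.re - c)^2 + z.im^2 →
        (iota ((-e) +ᵥ z)).re = 1/(2*r) := by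
      intro z hzr hz2
      rw [iota_re, vadd_re, normSq_eq, vadd_re, vadd_im]
      have hD : (-e + z.re)^2 + z.im^2 = 2*r*(r - (z.re - c)) := by nlinarith
      rw [hD]
      have h1 : r - (z.re - c) ≠ 0 := by nlinarith
      have h2 : r ≠ 0 := by nlinarith
      field_simp
      ring
    rw [key p hpr hrsq, key q hqr hrsq']

lemma iota_of_vI (w : ℍ) (v : ℝ) (hv : 0 < v) (hw : (w:ℂ) = (v:ℝ) * Complex.I) :
    (iota w : ℂ) = ((v⁻¹ : ℝ) : ℂ) * Complex.I := by
  have hv' : ((v:ℝ):ℂ) ≠ 0 := by exact_mod_cast hv.ne'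
  have hmul : (((v⁻¹:ℝ)):ℂ) * Complex.I * -(((v:ℝ):ℂ) * Complex.I) = 1 := by
    push_cast
    rw [show ((v:ℂ))⁻¹ * Complex.I * -((v:ℂ) * Complex.I)
        = -(((v:ℂ))⁻¹ * (v:ℂ)) * (Complex.I * Complex.I) from by ring,
      Complex.I_mul_I, inv_mul_cancel₀ hv']
    ring
  rw [iota_coe, hw]
  exact inv_eq_of_mul_eq_one_right (by linear_combination hmul)

lemma hypNormalize (p q : ℍ) : ∃ φ : ℍ → ℍ,
    (∀ z w : ℍ, dist (φ z) (φ w) = dist z w) ∧ ((φ p : ℂ) = Complex.I) ∧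
    ((φ q : ℂ) = (Real.exp (dist p q) : ℝ) * Complex.I) := by
  obtain ⟨φ₀, hφ₀, hre⟩ := stage1 p q
  obtain ⟨φ₁, hφ₁, hφ₁c⟩ := affine_ex (φ₀ p).re (φ₀ p).im (φ₀ p).im_pos
  have hp0 : ((φ₀ p).im : ℝ) ≠ 0 := (φ₀ p).im_pos.ne'
  have him : ∀ z : ℍ, z.re = (φ₀ p).re → (φ₁ z : ℂ) = ((z.im / (φ₀ p).im : ℝ) : ℂ) * Complex.I := by
    intro z hz
    have hzc : (z:ℂ) = ((((φ₀ p).re : ℝ) : ℂ) + ((z.im : ℝ) : ℂ) * Complex.I) := by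
      rw [← re_add_im (z:ℂ), UpperHalfPlane.coe_re, UpperHalfPlane.coe_im, hz]
    rw [hφ₁c z, hzc]
    push_cast
    field_simp
    ring
  have hP : (φ₁ (φ₀ p) : ℂ) = Complex.I := by
    rw [him (φ₀ p) rfl, div_self hp0]; simp
  set v : ℝ := (φ₀ q).im / (φ₀ p).im with hvdef
  have hv : 0 < v := div_pos (φ₀ q).im_pos (φ₀ p).im_pos
  have hQ : (φ₁ (φ₀ q) : ℂ) = ((v:ℝ):ℂ) * Complex.I := by
    rw [him (φ₀ q) hre.symm]
  have main : ∃ Φ : ℍ → ℍ, (∀ z w : ℍ, dist (Φ z) (Φ w) = dist z w) ∧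
      ((Φ p : ℂ) = Complex.I) ∧ ∃ u : ℝ, 1 ≤ u ∧ (Φ q : ℂ) = ((u:ℝ):ℂ) * Complex.I := by
    rcases le_or_gt 1 v with h1 | h1
    · exact ⟨φ₁ ∘ φ₀, fun z w => by simp only [Function.comp_apply, hφ₁, hφ₀], hP, v, h1, hQ⟩
    · refine ⟨iota ∘ φ₁ ∘ φ₀, fun z w => by
        simp only [Function.comp_apply, iota_dist, hφ₁, hφ₀], ?_, v⁻¹, ?_, ?_⟩
      · show (iota (φ₁ (φ₀ p)) : ℂ) = Complex.I
        rw [iota_of_vI _ 1 one_pos (by rw [hP]; norm_num)]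
        norm_num
      · nlinarith [inv_mul_cancel₀ hv.ne', inv_pos.mpr hv]
      · show (iota (φ₁ (φ₀ q)) : ℂ) = _
        rw [iota_of_vI _ v hv hQ]
  obtain ⟨Φ, hΦd, hΦp, u, hu, hΦq⟩ := main
  have hu0 : (0:ℝ) < u := lt_of_lt_of_le one_pos hu
  have hPre : (Φ p).re = 0 := by rw [← UpperHalfPlane.coe_re, hΦp]; simp
  have hQre : (Φ q).re = 0 := by rw [← UpperHalfPlane.coe_re, hΦq]; simp
  have hPim : (Φ p).im = 1 := by rw [← UpperHalfPlane.coe_im, hΦp]; simp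
  have hQim : (Φ q).im = u := by rw [← UpperHalfPlane.coe_im, hΦq]; simp
  have hdist : dist p q = Real.log u := by
    rw [← hΦd p q, UpperHalfPlane.dist_of_re_eq (hPre.trans hQre.symm), hPim, hQim,
      Real.log_one, Real.dist_eq, abs_sub_comm, sub_zero, _root_.abs_of_nonneg (Real.log_nonneg hu)]
  refine ⟨Φ, hΦd, hΦp, ?_⟩
  rw [hΦq, hdist, Real.exp_log hu0]

set_option maxHeartbeats 1000000 in
lemma stewart (x p m q : ℍ) (h : dist p m + dist m q = dist p q) :
    Real.cosh (dist x m) * Real.sinh (dist p q)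
      = Real.cosh (dist x p) * Real.sinh (dist m q)
        + Real.cosh (dist x q) * Real.sinh (dist p m) := by
  rcases eq_or_lt_of_le (dist_nonneg : (0:ℝ) ≤ dist p q) with hs | hs
  · have h1 : dist p m = 0 := by
      have := dist_nonneg (x := p) (y := m); have := dist_nonneg (x := m) (y := q); linarith
    have h2 : dist m q = 0 := by
      have := dist_nonneg (x := p) (y := m); have := dist_nonneg (x := m) (y := q); linarith
    rw [h1, h2, ← hs, Real.sinh_zero]; ring
  · obtain ⟨φ, hiso, hp, hq⟩ := hypNormalize p q
    set E : ℝ := Real.exp (dist p q) with hE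
    set F : ℝ := Real.exp (dist p m) with hF
    have hE1 : 1 < E := by rw [hE, ← Real.exp_zero]; exact Real.exp_lt_exp.mpr hs
    have hF0 : 0 < F := Real.exp_pos _
    have hmq : dist m q = dist p q - dist p m := by linarith
    have hEF : Real.exp (dist m q) = E / F := by rw [hmq, Real.exp_sub]
    have hpre : (φ p).re = 0 := by rw [← UpperHalfPlane.coe_re, hp]; simp
    have hpim : (φ p).im = 1 := by rw [← UpperHalfPlane.coe_im, hp]; simp
    have hqre : (φ q).re = 0 := by rw [← UpperHalfPlane.coe_re, hq]; simp
    have hqim : (φ q).im = E := by rw [← UpperHalfPlane.coe_im, hq]; simp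
    set a : ℝ := (φ m).re with ha'
    set b : ℝ := (φ m).im with hb'
    have hb0 : 0 < b := (φ m).im_pos
    set A : ℝ := (φ x).re with hA'
    set Bb : ℝ := (φ x).im with hB'
    have hBb0 : 0 < Bb := (φ x).im_pos
    have hE0 : (0:ℝ) < E := by linarith
    have e1 : (a^2 + 1 + b^2) * F = (F^2 + 1) * b := by
      have h0 := cosh_dist' (φ p) (φ m)
      rw [hiso, Real.cosh_eq, Real.exp_neg, ← hF, hpre, hpim, ← ha', ← hb'] at h0
      field_simp at h0
      linear_combination (-1:ℝ) * h0
    have e2 : (a^2 + E^2 + b^2) * F = (E^2 + F^2) * b := by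
      have h0 := cosh_dist' (φ m) (φ q)
      rw [hiso, hmq, Real.cosh_eq, Real.exp_neg, Real.exp_sub, ← hF, ← hE, hqre, hqim,
        ← ha', ← hb'] at h0
      field_simp at h0
      have h1 : ((a^2+E^2+b^2)*F) * (2*E) = ((E^2+F^2)*b) * (2*E) := by linear_combination (-2*E) * h0
      exact mul_right_cancel₀ (by positivity) h1
    have hd : E^2 - 1 ≠ 0 := by nlinarith
    have hb : b = F := by
      have h3 : (E^2 - 1) * b = (E^2 - 1) * F := by linear_combination e1 - e2
      exact mul_left_cancel₀ hd h3
    have ha : a = 0 := by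
      have h4 : a^2 * F = 0 := by rw [hb] at e1; linear_combination e1
      have h5 : a^2 = 0 := by
        rcases mul_eq_zero.mp h4 with h' | h'
        · exact h'
        · exact absurd h' hF0.ne'
      exact pow_eq_zero_iff two_ne_zero |>.mp h5
    rw [show dist x m = dist (φ x) (φ m) from (hiso x m).symm,
        show dist x p = dist (φ x) (φ p) from (hiso x p).symm,
        show dist x q = dist (φ x) (φ q) from (hiso x q).symm,
        cosh_dist', cosh_dist', cosh_dist',
        Real.sinh_eq (dist p q), Real.sinh_eq (dist m q), Real.sinh_eq (dist p m),
        Real.exp_neg, Real.exp_neg, Real.exp_neg, hEF, ← hE, ← hF,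
        hpre, hpim, hqre, hqim, ← ha', ← hb', ← hA', ← hB', ha, hb]
    field_simp
    ring

lemma one_sub_exp_neg {ε : ℝ} (h0 : 0 ≤ ε) (h1 : ε ≤ 1) : ε/2 ≤ 1 - Real.exp (-ε) := by
  have h3 : 0 < Real.exp ε := Real.exp_pos ε
  have hh : 1 ≤ Real.exp ε * (1 - ε/2) := by nlinarith [Real.add_one_le_exp ε]
  have h4 : Real.exp (-ε) = (Real.exp ε)⁻¹ := Real.exp_neg ε
  have h5 : (Real.exp ε)⁻¹ ≤ 1 - ε/2 := by
    rw [inv_eq_one_div, div_le_iff₀ h3]; nlinarith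
  rw [h4]; linarith

lemma csid (a b u : ℝ) : Real.cosh a * Real.sinh (b + u)
    = Real.cosh (a + u) * Real.sinh b + Real.sinh u * Real.cosh (a - b) := by
  simp only [Real.cosh_eq, Real.sinh_eq, Real.exp_add, Real.exp_sub, Real.exp_neg]
  have ha := Real.exp_ne_zero a; have hb := Real.exp_ne_zero b; have hu := Real.exp_ne_zero u
  field_simp
  ring

set_option maxHeartbeats 1000000 in
lemma tail (α : ℝ → ℍ) (hα : ∀ s t : ℝ, 0 ≤ s → 0 ≤ t → dist (α s) (α t) = |s - t|)
    (x : ℍ) {R T s : ℝ} (hR : 1 ≤ R) (hx : dist x (α 0) ≤ R)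
    (hT : 2*R + 2 ≤ T) (hs : T ≤ s) :
    dist x (α T) - T - 40 * Real.exp (2*R - 2*T) ≤ dist x (α s) - s := by
  have hT0 : (0:ℝ) ≤ T := by linarith
  have hs0 : (0:ℝ) ≤ s := by linarith
  set u : ℝ := s - T with hu
  have hu0 : 0 ≤ u := by linarith
  set R' : ℝ := dist x (α 0) with hR'
  have hR'0 : 0 ≤ R' := dist_nonneg
  set dT : ℝ := dist x (α T) with hdT
  set D : ℝ := dist x (α s) with hD
  have hD0 : 0 ≤ D := dist_nonneg
  set ε : ℝ := 40 * Real.exp (2*R - 2*T) with hε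
  set M : ℝ := dT + u with hM
  have hpm : dist (α 0) (α T) = T := by
    rw [hα 0 T le_rfl hT0, abs_of_nonpos (by linarith : (0:ℝ) - T ≤ 0)]; ring
  have hmq : dist (α T) (α s) = u := by
    rw [hα T s hT0 hs0, abs_of_nonpos (by linarith : T - s ≤ 0)]; ring
  have hpq : dist (α 0) (α s) = s := by
    rw [hα 0 s le_rfl hs0, abs_of_nonpos (by linarith : (0:ℝ) - s ≤ 0)]; ring
  have hbet : dist (α 0) (α T) + dist (α T) (α s) = dist (α 0) (α s) := by
    rw [hpm, hmq, hpq]; ring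
  have hst := stewart x (α 0) (α T) (α s) hbet
  rw [hpm, hmq, hpq, ← hR', ← hdT, ← hD] at hst
  have htri1 : T ≤ R' + dT := by
    have h' := dist_triangle (α 0) x (α T)
    rw [hpm, dist_comm (α 0) x, ← hR', ← hdT] at h'; linarith
  have hgoal : M - ε ≤ D → dT - T - 40 * Real.exp (2*R - 2*T) ≤ D - s := by
    intro h'; rw [← hε]; rw [hM, hu] at h'; linarith
  apply hgoal
  rcases le_or_gt (M - ε) 0 with hM0 | hM0
  · linarith
  set x1 : ℝ := Real.exp M with hx1
  set x2 : ℝ := Real.exp T with hx2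
  set x3 : ℝ := Real.exp u with hx3
  set x4 : ℝ := Real.exp R with hx4
  set x5 : ℝ := Real.exp ε with hx5
  set x7 : ℝ := Real.exp (R - T) with hx7
  have hx1p : 0 < x1 := Real.exp_pos _
  have hx2p : 0 < x2 := Real.exp_pos _
  have hx3p : 0 < x3 := Real.exp_pos _
  have hx4p : 0 < x4 := Real.exp_pos _
  have hx5p : 0 < x5 := Real.exp_pos _
  have hx7p : 0 < x7 := Real.exp_pos _
  have hε0 : 0 < ε := by rw [hε]; positivity
  have hexp6 : (64:ℝ) ≤ Real.exp 6 := by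
    have h2 : (2:ℝ) ≤ Real.exp 1 := by
      have := Real.exp_one_gt_d9; nlinarith
    have h3 : Real.exp 6 = (Real.exp 1)^(6:ℕ) := by
      rw [← Real.exp_nat_mul]; norm_num
    calc (64:ℝ) = 2^(6:ℕ) := by norm_num
    _ ≤ (Real.exp 1)^(6:ℕ) := pow_le_pow_left₀ (by norm_num) h2 6
    _ = Real.exp 6 := h3.symm
  have hε1 : ε ≤ 1 := by
    have h1 : 2*R - 2*T ≤ -6 := by linarith
    have h2 : Real.exp (2*R-2*T) ≤ Real.exp (-6) := Real.exp_le_exp.mpr h1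
    have h3 : Real.exp (-6) * Real.exp 6 = 1 := by
      rw [← Real.exp_add]; norm_num
    have h4 : Real.exp (-6) ≤ 1/64 := by
      have := Real.exp_pos (-6 : ℝ); nlinarith
    rw [hε]; nlinarith
  have hx5le : x5 ≤ 3 := by
    have h2 : x5 ≤ Real.exp 1 := by rw [hx5]; exact Real.exp_le_exp.mpr hε1
    have := Real.exp_one_lt_d9; nlinarith
  have hMTR : T - R ≤ M := by rw [hM]; linarith
  have hprod : ε * x2 * x2 = 40 * (x4 * x4) := by
    rw [hε, hx2, hx4,
      show 40 * Real.exp (2*R-2*T) * Real.exp T * Real.exp T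
        = 40 * (Real.exp (2*R-2*T) * Real.exp T * Real.exp T) from by ring,
      ← Real.exp_add, ← Real.exp_add, ← Real.exp_add,
      show 2*R-2*T+T+T = R+R from by ring]
  have hMa : x3 * x2 ≤ x1 * x4 := by
    rw [hx1, hx4, hx3, hx2, ← Real.exp_add, ← Real.exp_add]
    exact Real.exp_le_exp.mpr (by rw [hM]; linarith)
  have hx7x2 : x7 * x2 = x4 := by
    rw [hx7, hx2, hx4, ← Real.exp_add, show R-T+T = R from by ring]
  have hx31 : 1 ≤ x3 := by
    rw [hx3, ← Real.exp_zero]; exact Real.exp_le_exp.mpr hu0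
  have hx2ge : 5 ≤ x2 := by
    have := Real.add_one_le_exp T; rw [hx2]; linarith
  have hexpnegT : Real.exp (-T) ≤ 1 := by
    rw [← Real.exp_zero]; exact Real.exp_le_exp.mpr (by linarith)
  have c2a : x2/4 ≤ Real.sinh T := by
    rw [Real.sinh_eq, ← hx2]; linarith
  have c2b : Real.sinh T ≤ x2/2 := by
    rw [Real.sinh_eq, ← hx2]; have := Real.exp_pos (-T); linarith
  have c3a : Real.sinh u ≤ x3/2 := by
    rw [Real.sinh_eq, ← hx3]; have := Real.exp_pos (-u); linarith
  have c3b : 0 ≤ Real.sinh u := by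
    rw [Real.sinh_eq, ← hx3]
    have : Real.exp (-u) ≤ x3 := by rw [hx3]; exact Real.exp_le_exp.mpr (by linarith)
    linarith
  have c4 : Real.cosh R' ≤ x4 := by
    rw [Real.cosh_eq]
    have h1 : Real.exp (-R') ≤ Real.exp R' := Real.exp_le_exp.mpr (by linarith)
    have h2 : Real.exp R' ≤ x4 := by rw [hx4]; exact Real.exp_le_exp.mpr (by linarith)
    linarith
  have c1 : ε/4 * x1 - x5*x7/2 ≤ Real.cosh M - Real.cosh (M - ε) := by
    rw [Real.cosh_eq, Real.cosh_eq, ← hx1]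
    have e1 : Real.exp (M - ε) = x1 * Real.exp (-ε) := by
      rw [hx1, ← Real.exp_add, show M + -ε = M - ε from by ring]
    have e2 : Real.exp (-(M - ε)) ≤ x7 * x5 := by
      rw [hx7, hx5, ← Real.exp_add]; exact Real.exp_le_exp.mpr (by linarith)
    have e3 : ε/2 ≤ 1 - Real.exp (-ε) := one_sub_exp_neg hε0.le hε1
    have e4 : (0:ℝ) < Real.exp (-M) := Real.exp_pos _
    rw [e1]
    have g := mul_le_mul_of_nonneg_left e3 hx1p.le
    rw [mul_sub, mul_one] at g
    linarith [g, e2, e4]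
  have b1 : Real.sinh u * Real.cosh R' ≤ (x3/2) * x4 :=
    mul_le_mul c3a c4 (Real.cosh_pos _).le (by positivity)
  have b2 : 40 * (x3*x4) ≤ ε * (x1 * x2) := by
    have p1 : ε*x2*(x3*x2) ≤ ε*x2*(x1*x4) :=
      mul_le_mul_of_nonneg_left hMa (by positivity)
    have p3 : (40*(x3*x4))*x4 ≤ (ε*(x1*x2))*x4 := by
      calc (40*(x3*x4))*x4 = (ε*x2*x2)*x3 := by rw [hprod]; ring
      _ = ε*x2*(x3*x2) := by ring
      _ ≤ ε*x2*(x1*x4) := p1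
      _ = (ε*(x1*x2))*x4 := by ring
    exact le_of_mul_le_mul_right p3 hx4p
  have key : Real.sinh u * Real.cosh R' ≤
      Real.cosh M * Real.sinh T - Real.cosh (M-ε) * Real.sinh T := by
    have d1 : (ε/4*x1 - x5*x7/2) * Real.sinh T
        ≤ (Real.cosh M - Real.cosh (M-ε)) * Real.sinh T :=
      mul_le_mul_of_nonneg_right c1 (by linarith)
    have d2 : ε/4*x1*(x2/4) - x5*x7/2*(x2/2) ≤ (ε/4*x1 - x5*x7/2) * Real.sinh T := by
      have g1 : ε/4*x1*(x2/4) ≤ ε/4*x1 * Real.sinh T :=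
        mul_le_mul_of_nonneg_left c2a (by positivity)
      have g2 : x5*x7/2 * Real.sinh T ≤ x5*x7/2*(x2/2) :=
        mul_le_mul_of_nonneg_left c2b (by positivity)
      have e : (ε/4*x1 - x5*x7/2) * Real.sinh T
          = ε/4*x1*Real.sinh T - x5*x7/2*Real.sinh T := by ring
      linarith [g1, g2, e]
    have hsub : x5*x7/2*(x2/2) = x5*x4/4 := by rw [← hx7x2]; ring
    have d3 : x3*x4/2 ≤ ε/4*x1*(x2/4) - x5*x7/2*(x2/2) := by
      rw [hsub]
      have h35a : x5*x4 ≤ 3*x4 := mul_le_mul_of_nonneg_right hx5le hx4p.le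
      have h35b : x4 ≤ x3*x4 := le_mul_of_one_le_left hx4p.le hx31
      linarith [b2, h35a, h35b]
    have e : (Real.cosh M - Real.cosh (M-ε)) * Real.sinh T
        = Real.cosh M * Real.sinh T - Real.cosh (M-ε) * Real.sinh T := by ring
    linarith [b1, d3, d2, d1, e]
  have hid := csid dT T u
  rw [show T + u = s from by rw [hu]; ring, ← hM] at hid
  have hstep : Real.cosh (M - ε) * Real.sinh T ≤ Real.cosh D * Real.sinh T := by
    linarith [hid, hst, key, mul_nonneg c3b (le_of_lt (Real.cosh_pos (dT - T)))]
  have hsinhT : 0 < Real.sinh T := by linarith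
  have hcle : Real.cosh (M-ε) ≤ Real.cosh D := le_of_mul_le_mul_right hstep hsinhT
  have habs := Real.cosh_le_cosh.mp hcle
  rw [abs_of_pos hM0, _root_.abs_of_nonneg hD0] at habs
  exact habs

open Filter in
lemma Best (α : ℝ → ℍ) (hα : ∀ s t : ℝ, 0 ≤ s → 0 ≤ t → dist (α s) (α t) = |s - t|)
    (Bf : ℝ) (x y : ℍ)
    (hB : Tendsto (fun t : ℝ => dist x (α t) - dist (α t) y) atTop (nhds Bf))
    {R T : ℝ} (hR : 1 ≤ R) (hx : dist x (α 0) ≤ R) (hy : dist y (α 0) ≤ R)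
    (hT : 2*R + 2 ≤ T) :
    |Bf - (dist x (α T) - dist (α T) y)| ≤ 40 * Real.exp (2*R - 2*T) := by
  set ε1 : ℝ := 40 * Real.exp (2*R - 2*T) with hε1
  have hT0 : (0:ℝ) ≤ T := by linarith
  have mono : ∀ z : ℍ, ∀ s, T ≤ s → dist z (α s) - s ≤ dist z (α T) - T := by
    intro z s hs
    have h1 := dist_triangle z (α T) (α s)
    rw [hα T s hT0 (by linarith), abs_of_nonpos (by linarith : T - s ≤ 0)] at h1
    linarith
  have low : ∀ z : ℍ, dist z (α 0) ≤ R → ∀ s, T ≤ s →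
      dist z (α T) - T - ε1 ≤ dist z (α s) - s := fun z hz s hs =>
    tail α hα z hR hz hT hs
  have hub : ∀ s, T ≤ s → dist x (α s) - dist (α s) y
      ≤ (dist x (α T) - dist (α T) y) + ε1 := by
    intro s hs
    have l1 := mono x s hs
    have l2 := low y hy s hs
    rw [dist_comm (α s) y, dist_comm (α T) y]
    linarith
  have hlb : ∀ s, T ≤ s → (dist x (α T) - dist (α T) y) - ε1
      ≤ dist x (α s) - dist (α s) y := by
    intro s hs
    have l1 := low x hx s hs
    have l2 := mono y s hs
    rw [dist_comm (α s) y, dist_comm (α T) y]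
    linarith
  have h1 : Bf ≤ (dist x (α T) - dist (α T) y) + ε1 :=
    le_of_tendsto hB (eventually_atTop.2 ⟨T, hub⟩)
  have h2 : (dist x (α T) - dist (α T) y) - ε1 ≤ Bf :=
    ge_of_tendsto hB (eventually_atTop.2 ⟨T, hlb⟩)
  rw [abs_le]; constructor <;> linarith


set_option maxHeartbeats 1000000 in

/-- **Continuity of the Busemann map for `ℍ`.**
If rays `α_n` of the hyperbolic plane converge to a ray `α` uniformly on compact subsets
of `[0,∞)`, then `B_{α_n}(x,y) → B_α(x,y)` for all `x, y`, uniformly on compact subsets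
of `ℍ × ℍ`. -/
theorem busemann_map_continuous (αn : ℕ → ℝ → ℍ) (α : ℝ → ℍ)
    (hαn : ∀ n, ∀ s t : ℝ, 0 ≤ s → 0 ≤ t → dist (αn n s) (αn n t) = |s - t|)
    (hα : ∀ s t : ℝ, 0 ≤ s → 0 ≤ t → dist (α s) (α t) = |s - t|)
    (hconv : ∀ T : ℝ, 0 ≤ T →
      TendstoUniformlyOn (fun n t => αn n t) α atTop (Set.Icc 0 T))
    (Bn : ℕ → ℍ → ℍ → ℝ) (B : ℍ → ℍ → ℝ)
    (hBn : ∀ n (x y : ℍ), Tendsto (fun t : ℝ => dist x (αn n t) - dist (αn n t) y)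
      atTop (nhds (Bn n x y)))
    (hB : ∀ x y : ℍ, Tendsto (fun t : ℝ => dist x (α t) - dist (α t) y)
      atTop (nhds (B x y))) :
    (∀ x y : ℍ, Tendsto (fun n => Bn n x y) atTop (nhds (B x y))) ∧
    (∀ K : Set (ℍ × ℍ), IsCompact K →
      TendstoUniformlyOn (fun n (p : ℍ × ℍ) => Bn n p.1 p.2)
        (fun p => B p.1 p.2) atTop K) := by
  have huni : ∀ K : Set (ℍ × ℍ), IsCompact K →
      TendstoUniformlyOn (fun n (p : ℍ × ℍ) => Bn n p.1 p.2)
        (fun p => B p.1 p.2) atTop K := by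
    intro K hK
    rw [Metric.tendstoUniformlyOn_iff]
    intro ε hε
    obtain ⟨R0, hR0a, hR0b⟩ : ∃ R0 : ℝ, 0 ≤ R0 ∧
        ∀ p ∈ K, dist p.1 (α 0) ≤ R0 ∧ dist p.2 (α 0) ≤ R0 := by
      rcases K.eq_empty_or_nonempty with hKe | hKn
      · exact ⟨0, le_rfl, by simp [hKe]⟩
      · have hc : ContinuousOn (fun p : ℍ × ℍ =>
            max (dist p.1 (α 0)) (dist p.2 (α 0))) K :=
          ((continuous_fst.dist continuous_const).max
            (continuous_snd.dist continuous_const)).continuousOn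
        obtain ⟨p0, _, hp0⟩ := hK.exists_isMaxOn hKn hc
        refine ⟨max (dist p0.1 (α 0)) (dist p0.2 (α 0)),
          le_trans dist_nonneg (le_max_left _ _), fun p hp => ?_⟩
        have h' := hp0 hp
        exact ⟨le_trans (le_max_left _ _) h', le_trans (le_max_right _ _) h'⟩
    set R : ℝ := R0 + 2 with hRdef
    have hR1 : 1 ≤ R := by rw [hRdef]; linarith
    obtain ⟨T, hT1, hT2⟩ : ∃ T, 2*R + 2 ≤ T ∧ 160 * Real.exp (2*R - 2*T) < ε/2 := by
      have h1 : Tendsto (fun T : ℝ => 2*R - 2*T) atTop atBot := by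
        rw [tendsto_atBot]
        intro b
        filter_upwards [eventually_ge_atTop ((2*R - b)/2)] with T hT
        linarith
      have h2 : Tendsto (fun T : ℝ => Real.exp (2*R - 2*T)) atTop (nhds 0) :=
        Real.tendsto_exp_atBot.comp h1
      have h3 : Tendsto (fun T : ℝ => 160 * Real.exp (2*R - 2*T)) atTop (nhds 0) := by
        simpa using h2.const_mul (160:ℝ)
      have h4 := h3.eventually (gt_mem_nhds (by positivity : (0:ℝ) < ε/2))
      rcases (h4.and (eventually_ge_atTop (2*R + 2))).exists with ⟨T, hTa, hTb⟩
      exact ⟨T, hTb, hTa⟩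
    have hT0 : (0:ℝ) ≤ T := by linarith
    have hcl0 : ∀ᶠ n in atTop, dist (αn n 0) (α 0) < 1 := by
      have h' := (hconv 0 le_rfl).tendsto_at (Set.mem_Icc.mpr ⟨le_rfl, le_rfl⟩)
      exact Metric.tendsto_nhds.mp h' 1 one_pos
    have hclT : ∀ᶠ n in atTop, dist (αn n T) (α T) < ε/8 := by
      have h' := (hconv T hT0).tendsto_at (Set.mem_Icc.mpr ⟨hT0, le_rfl⟩)
      exact Metric.tendsto_nhds.mp h' (ε/8) (by positivity)
    filter_upwards [hcl0, hclT] with n hn0 hnT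
    intro p hp
    obtain ⟨hpx, hpy⟩ := hR0b p hp
    have hxR : dist p.1 (α 0) ≤ R := by rw [hRdef]; linarith
    have hyR : dist p.2 (α 0) ≤ R := by rw [hRdef]; linarith
    have hxRn : dist p.1 (αn n 0) ≤ R := by
      have h' := dist_triangle p.1 (α 0) (αn n 0)
      rw [dist_comm (α 0) (αn n 0)] at h'
      rw [hRdef]; linarith
    have hyRn : dist p.2 (αn n 0) ≤ R := by
      have h' := dist_triangle p.2 (α 0) (αn n 0)
      rw [dist_comm (α 0) (αn n 0)] at h'
      rw [hRdef]; linarith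
    have est1 := Best α hα (B p.1 p.2) p.1 p.2 (hB p.1 p.2) hR1 hxR hyR hT1
    have est2 := Best (αn n) (hαn n) (Bn n p.1 p.2) p.1 p.2 (hBn n p.1 p.2) hR1 hxRn hyRn hT1
    have g1 : |dist p.1 (α T) - dist p.1 (αn n T)| ≤ dist (α T) (αn n T) := by
      have h' := abs_dist_sub_le (α T) (αn n T) p.1
      rw [dist_comm (α T) p.1, dist_comm (αn n T) p.1] at h'
      exact h'
    have g2 : |dist (α T) p.2 - dist (αn n T) p.2| ≤ dist (α T) (αn n T) :=
      abs_dist_sub_le _ _ _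
    have est3 : |(dist p.1 (α T) - dist (α T) p.2)
        - (dist p.1 (αn n T) - dist (αn n T) p.2)| ≤ 2 * dist (αn n T) (α T) := by
      have e : (dist p.1 (α T) - dist (α T) p.2) - (dist p.1 (αn n T) - dist (αn n T) p.2)
          = (dist p.1 (α T) - dist p.1 (αn n T)) - (dist (α T) p.2 - dist (αn n T) p.2) := by
        ring
      rw [e, dist_comm (αn n T) (α T)]
      exact (abs_sub _ _).trans (by linarith)
    rw [Real.dist_eq]
    have e2 : B p.1 p.2 - Bn n p.1 p.2
        = (B p.1 p.2 - (dist p.1 (α T) - dist (α T) p.2))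
          + (((dist p.1 (α T) - dist (α T) p.2) - (dist p.1 (αn n T) - dist (αn n T) p.2))
          + ((dist p.1 (αn n T) - dist (αn n T) p.2) - Bn n p.1 p.2)) := by ring
    have habs : |B p.1 p.2 - Bn n p.1 p.2|
        ≤ |B p.1 p.2 - (dist p.1 (α T) - dist (α T) p.2)|
          + (|(dist p.1 (α T) - dist (α T) p.2) - (dist p.1 (αn n T) - dist (αn n T) p.2)|
          + |(dist p.1 (αn n T) - dist (αn n T) p.2) - Bn n p.1 p.2|) := by
      rw [e2]
      have t2 := abs_add_le ((dist p.1 (α T) - dist (α T) p.2)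
          - (dist p.1 (αn n T) - dist (αn n T) p.2))
        ((dist p.1 (αn n T) - dist (αn n T) p.2) - Bn n p.1 p.2)
      exact (abs_add_le _ _).trans (by linarith)
    have est2' : |(dist p.1 (αn n T) - dist (αn n T) p.2) - Bn n p.1 p.2|
        ≤ 40 * Real.exp (2*R - 2*T) := by
      rw [abs_sub_comm]; exact est2
    have hd : 2 * dist (αn n T) (α T) < ε/4 := by linarith
    have h40 : 40 * Real.exp (2*R - 2*T) < ε/8 := by
      have := Real.exp_pos (2*R - 2*T); linarith
    linarith [habs, est1, est3, est2', hd, h40]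
  refine ⟨fun x y => ?_, huni⟩
  exact (huni {(x, y)} isCompact_singleton).tendsto_at rfl
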